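/- For every valuation frame M, every unit chain s₀⋗⋯⋗s_k, and every formula F in unit chain expansion, the chain-extension law holds: [M ⊨ (s₀⋗s₁⋗⋯⋗s_k)⋗F] computed via reduction equals [M ⊨ (s₀⋗F) ∧ ((s₀⋗s₁⋗⋯⋗s_k) ∨ ((s₀⋗s₁⋗F) ∧ (s₀⋗s₁⋗s₂⋗F) ∧ ⋯ ∧ (s₀⋗s₁⋗⋯⋗s_k⋗F)))]. -/

import Mathlib

/-- Atomic symbols: literals from `A` together with ⊤ and ⊥. -/
inductive Atom (A : Type) : Type where
  | lit : A → Atom A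
  | top : Atom A
  | bot : Atom A

/-- Complement on atoms, induced by a complement map `c` on literals. -/
def Atom.compl {A : Type} (c : A → A) : Atom A → Atom A
  | .lit a => .lit (c a)
  | .top => .bot
  | .bot => .top

/-- Formulas of gradual classical logic. `grad` is the connective ⋗. -/
inductive Fm (A : Type) : Type where
  | atom : Atom A → Fm A
  | and : Fm A → Fm A → Fm A
  | or : Fm A → Fm A → Fm A
  | neg : Fm A → Fm A
  | grad : Fm A → Fm A → Fm A

/-- One-step rewriting using only the five ⋗-rules (with congruence closure). -/
inductive GStep {A : Type} : Fm A → Fm A → Prop where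
  | gradAssoc (F G H) : GStep (.grad (.grad F G) H)
      (.and (.grad F H) (.or (.grad F G) (.grad F (.grad G H))))
  | gradAndL (F G H) : GStep (.grad (.and F G) H) (.and (.grad F H) (.grad G H))
  | gradOrL (F G H) : GStep (.grad (.or F G) H) (.or (.grad F H) (.grad G H))
  | gradAndR (F G H) : GStep (.grad F (.and G H)) (.and (.grad F G) (.grad F H))
  | gradOrR (F G H) : GStep (.grad F (.or G H)) (.or (.grad F G) (.grad F H))
  | andL {F F'} (G) : GStep F F' → GStep (.and F G) (.and F' G)
  | andR (F) {G G'} : GStep G G' → GStep (.and F G) (.and F G')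
  | orL {F F'} (G) : GStep F F' → GStep (.or F G) (.or F' G)
  | orR (F) {G G'} : GStep G G' → GStep (.or F G) (.or F G')
  | negC {F F'} : GStep F F' → GStep (.neg F) (.neg F')
  | gradL {F F'} (G) : GStep F F' → GStep (.grad F G) (.grad F' G)
  | gradR (F) {G G'} : GStep G G' → GStep (.grad F G) (.grad F G')

/-- One-step rewriting with both the ¬-rules and the ⋗-rules (congruence closure). -/
inductive Step {A : Type} (c : A → A) : Fm A → Fm A → Prop where
  | negAtom (s) : Step c (.neg (.atom s)) (.atom (s.compl c))
  | negAnd (F G) : Step c (.neg (.and F G)) (.or (.neg F) (.neg G))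
  | negOr (F G) : Step c (.neg (.or F G)) (.and (.neg F) (.neg G))
  | negGrad (s F) : Step c (.neg (.grad (.atom s) F))
      (.or (.atom (s.compl c)) (.grad (.atom s) (.neg F)))
  | gradAssoc (F G H) : Step c (.grad (.grad F G) H)
      (.and (.grad F H) (.or (.grad F G) (.grad F (.grad G H))))
  | gradAndL (F G H) : Step c (.grad (.and F G) H) (.and (.grad F H) (.grad G H))
  | gradOrL (F G H) : Step c (.grad (.or F G) H) (.or (.grad F H) (.grad G H))
  | gradAndR (F G H) : Step c (.grad F (.and G H)) (.and (.grad F G) (.grad F H))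
  | gradOrR (F G H) : Step c (.grad F (.or G H)) (.or (.grad F G) (.grad F H))
  | andL {F F'} (G) : Step c F F' → Step c (.and F G) (.and F' G)
  | andR (F) {G G'} : Step c G G' → Step c (.and F G) (.and F G')
  | orL {F F'} (G) : Step c F F' → Step c (.or F G) (.or F' G)
  | orR (F) {G G'} : Step c G G' → Step c (.or F G) (.or F G')
  | negC {F F'} : Step c F F' → Step c (.neg F) (.neg F')
  | gradL {F F'} (G) : Step c F F' → Step c (.grad F G) (.grad F' G)
  | gradR (F) {G G'} : Step c G G' → Step c (.grad F G) (.grad F G')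

/-- Reduction: reflexive-transitive closure of one-step rewriting (all rules). -/
def Red {A : Type} (c : A → A) : Fm A → Fm A → Prop :=
  Relation.ReflTransGen (Step c)

/-- Reduction using only the ⋗-rules. -/
def GRed {A : Type} : Fm A → Fm A → Prop :=
  Relation.ReflTransGen GStep

/-- Unit chains (possibly of length one, i.e. a single atom): s₀⋗s₁⋗⋯⋗s_k. -/
inductive UnitTail {A : Type} : Fm A → Prop where
  | atom (s : Atom A) : UnitTail (.atom s)
  | grad (s : Atom A) {F : Fm A} : UnitTail F → UnitTail (.grad (.atom s) F)

/-- Formulas in unit chain expansion: built from atoms and unit chains via ∧ and ∨;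
in particular no ¬ occurs and every ⋗ lies in a unit chain of atoms. -/
inductive UCE {A : Type} : Fm A → Prop where
  | atom (s : Atom A) : UCE (.atom s)
  | and {F G : Fm A} : UCE F → UCE G → UCE (.and F G)
  | or {F G : Fm A} : UCE F → UCE G → UCE (.or F G)
  | chain (s : Atom A) {F : Fm A} : UnitTail F → UCE (.grad (.atom s) F)

/-- Negation-free formulas. -/
inductive NegFree {A : Type} : Fm A → Prop where
  | atom (s : Atom A) : NegFree (.atom s)
  | and {F G : Fm A} : NegFree F → NegFree G → NegFree (.and F G)
  | or {F G : Fm A} : NegFree F → NegFree G → NegFree (.or F G)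
  | grad {F G : Fm A} : NegFree F → NegFree G → NegFree (.grad F G)

/-- A valuation frame: a local interpretation `I` on prefix-sequences and atoms,
subject to the conditions of gradual classical logic.  The global interpretation `J`
is determined by `I` (see `GFrame.valAux`). -/
structure GFrame (A : Type) (c : A → A) : Type where
  I : List (Atom A) → Atom A → Bool
  I_top : ∀ ψ, I ψ .top = true
  I_bot : ∀ ψ, I ψ .bot = false
  I_compl : ∀ ψ (a : A), (I ψ (.lit a) = false ↔ I ψ (.lit (c a)) = true)
  I_sync : ∀ ψ ψ' s, ψ.length = ψ'.length → I ψ s = I ψ' s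

/-- Valuation relative to a prefix ψ.  On a unit chain s₀⋗⋯⋗s_k (with prefix ε)
this computes the global interpretation J(s₀…s_k) = 1 iff every local step is 1;
∧ and ∨ are Boolean. -/
def GFrame.valAux {A : Type} {c : A → A} (M : GFrame A c) :
    List (Atom A) → Fm A → Bool
  | ψ, .atom s => M.I ψ s
  | ψ, .and F G => M.valAux ψ F && M.valAux ψ G
  | ψ, .or F G => M.valAux ψ F || M.valAux ψ G
  | ψ, .neg F => !(M.valAux ψ F)
  | ψ, .grad (.atom s) G => M.I ψ s && M.valAux (ψ ++ [s]) G
  | _, .grad _ _ => false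

/-- The valuation [M ⊨ F]. -/
def GFrame.val {A : Type} {c : A → A} (M : GFrame A c) (F : Fm A) : Bool :=
  M.valAux [] F

/-- Push `s ⋗ ·` through ∧ and ∨ (normalization step of `recursiveReduce`). -/
def gradDist {A : Type} (s : Atom A) : Fm A → Fm A
  | .and F G => .and (gradDist s F) (gradDist s G)
  | .or F G => .or (gradDist s F) (gradDist s G)
  | F => .grad (.atom s) F

/-- `recursiveReduce`: swap ∧/∨, complement non-chain atoms, and replace a chain
with head s and tail T by s^c ∨ (s ⋗ recursiveReduce T), normalized into unit
chain expansion.  On a unit chain s₀⋗⋯⋗s_k it yields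
s₀^c ∨ (s₀⋗s₁^c) ∨ ⋯ ∨ (s₀⋗⋯⋗s_{k−1}⋗s_k^c). -/
def recursiveReduce {A : Type} (c : A → A) : Fm A → Fm A
  | .atom s => .atom (s.compl c)
  | .and F G => .or (recursiveReduce c F) (recursiveReduce c G)
  | .or F G => .and (recursiveReduce c F) (recursiveReduce c G)
  | .neg F => .neg (recursiveReduce c F)
  | .grad (.atom s) G => .or (.atom (s.compl c)) (gradDist s (recursiveReduce c G))
  | .grad F G => .grad (recursiveReduce c F) (recursiveReduce c G)

/-- The unit chain s₀⋗s₁⋗⋯⋗s_k given by a head and the list of remaining atoms. -/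
def chainOf {A : Type} (s : Atom A) : List (Atom A) → Fm A
  | [] => .atom s
  | t :: l => .grad (.atom s) (chainOf t l)

/-- Prepend a list of atoms as a ⋗-chain onto a formula. -/
def chainF {A : Type} : List (Atom A) → Fm A → Fm A
  | [], F => F
  | s :: l, F => .grad (.atom s) (chainF l F)

/-- Conjunction of a nonempty list of formulas. -/
def conjList {A : Type} : Fm A → List (Fm A) → Fm A
  | F, [] => F
  | F, G :: l => .and F (conjList G l)

/-- (s₀⋗s₁⋗F) ∧ (s₀⋗s₁⋗s₂⋗F) ∧ ⋯ ∧ (s₀⋗s₁⋗⋯⋗s_k⋗F) where the chain is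
s₀ :: s₁ :: rest. -/
def conjAll {A : Type} (s₀ s₁ : Atom A) (rest : List (Atom A)) (F : Fm A) : Fm A :=
  conjList (chainF [s₀, s₁] F)
    ((rest.inits.tail).map (fun p => chainF (s₀ :: s₁ :: p) F))

/- ===== Auxiliary development ===== -/

/-- Weight for termination of `gval`. -/
def fmWt {A : Type} : Fm A → ℕ
  | .atom _ => 1
  | .and F G => fmWt F + fmWt G + 1
  | .or F G => fmWt F + fmWt G + 1
  | .neg F => fmWt F + 1
  | .grad F G => 2 * fmWt F + fmWt G + 1

/-- Semantic valuation handling arbitrary formulas in grad-left position,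
invariant under the ⋗-rules on negation-free formulas. -/
def GFrame.gval {A : Type} {c : A → A} (M : GFrame A c) :
    List (Atom A) → Fm A → Bool
  | ψ, .atom s => M.I ψ s
  | ψ, .and F G => M.gval ψ F && M.gval ψ G
  | ψ, .or F G => M.gval ψ F || M.gval ψ G
  | ψ, .neg F => !(M.gval ψ F)
  | ψ, .grad (.atom s) G => M.I ψ s && M.gval (ψ ++ [s]) G
  | ψ, .grad (.and F₁ F₂) G => M.gval ψ (.grad F₁ G) && M.gval ψ (.grad F₂ G)
  | ψ, .grad (.or F₁ F₂) G => M.gval ψ (.grad F₁ G) || M.gval ψ (.grad F₂ G)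
  | _, .grad (.neg _) _ => false
  | ψ, .grad (.grad F₁ F₂) G =>
      M.gval ψ (.grad F₁ G) &&
        (M.gval ψ (.grad F₁ F₂) || M.gval ψ (.grad F₁ (.grad F₂ G)))
termination_by ψ F => fmWt F
decreasing_by all_goals simp only [fmWt]; omega

theorem gval_sync {A : Type} {c : A → A} (M : GFrame A c) :
    ∀ ψ (F : Fm A) ψ', ψ.length = ψ'.length → M.gval ψ F = M.gval ψ' F := by
  intro ψ F
  induction ψ, F using GFrame.gval.induct with
  | case1 ψ s =>
      intro ψ' h; simp only [GFrame.gval]; exact M.I_sync ψ ψ' s h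
  | case2 ψ F G ih1 ih2 =>
      intro ψ' h; simp only [GFrame.gval]; rw [ih1 ψ' h, ih2 ψ' h]
  | case3 ψ F G ih1 ih2 =>
      intro ψ' h; simp only [GFrame.gval]; rw [ih1 ψ' h, ih2 ψ' h]
  | case4 ψ F ih =>
      intro ψ' h; simp only [GFrame.gval]; rw [ih ψ' h]
  | case5 ψ s G ih =>
      intro ψ' h; simp only [GFrame.gval]
      rw [M.I_sync ψ ψ' s h, ih (ψ' ++ [s]) (by simp [h])]
  | case6 ψ F₁ F₂ G ih1 ih2 =>
      intro ψ' h; simp only [GFrame.gval]; rw [ih1 ψ' h, ih2 ψ' h]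
  | case7 ψ F₁ F₂ G ih1 ih2 =>
      intro ψ' h; simp only [GFrame.gval]; rw [ih1 ψ' h, ih2 ψ' h]
  | case8 => intro ψ' h; simp only [GFrame.gval]
  | case9 ψ F₁ F₂ G ih1 ih2 ih3 =>
      intro ψ' h; simp only [GFrame.gval]; rw [ih1 ψ' h, ih2 ψ' h, ih3 ψ' h]

theorem bool_ext {a b : Bool} (h : (a = true) ↔ (b = true)) : a = b := by
  cases a <;> cases b <;> simp_all

/-- Key product form: for negation-free `F`,
`[ψ ⊨ F ⋗ G] = [ψ ⊨ F] && [ψ·⊤ ⊨ G]`. -/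
theorem gval_grad {A : Type} {c : A → A} (M : GFrame A c) {F : Fm A}
    (hF : NegFree F) :
    ∀ ψ (G : Fm A),
      M.gval ψ (.grad F G) = (M.gval ψ F && M.gval (ψ ++ [.top]) G) := by
  induction hF with
  | atom s =>
      intro ψ G
      simp only [GFrame.gval]
      rw [gval_sync M (ψ ++ [s]) G (ψ ++ [.top]) (by simp)]
  | and h1 h2 ih1 ih2 =>
      intro ψ G
      simp only [GFrame.gval, ih1, ih2]
      apply bool_ext
      simp only [Bool.and_eq_true, Bool.or_eq_true]
      tauto
  | or h1 h2 ih1 ih2 =>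
      intro ψ G
      simp only [GFrame.gval, ih1, ih2]
      apply bool_ext
      simp only [Bool.and_eq_true, Bool.or_eq_true]
      tauto
  | grad h1 h2 ih1 ih2 =>
      intro ψ G
      simp only [GFrame.gval, ih1, ih2]
      apply bool_ext
      simp only [Bool.and_eq_true, Bool.or_eq_true]
      tauto

theorem gstep_negFree {A : Type} {F F' : Fm A} (h : GStep F F')
    (hF : NegFree F) : NegFree F' := by
  induction h with
  | gradAssoc F G H =>
      cases hF with | grad h1 h2 => cases h1 with | grad h3 h4 =>
      exact .and (.grad h3 h2) (.or (.grad h3 h4) (.grad h3 (.grad h4 h2)))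
  | gradAndL F G H =>
      cases hF with | grad h1 h2 => cases h1 with | and h3 h4 =>
      exact .and (.grad h3 h2) (.grad h4 h2)
  | gradOrL F G H =>
      cases hF with | grad h1 h2 => cases h1 with | or h3 h4 =>
      exact .or (.grad h3 h2) (.grad h4 h2)
  | gradAndR F G H =>
      cases hF with | grad h1 h2 => cases h2 with | and h3 h4 =>
      exact .and (.grad h1 h3) (.grad h1 h4)
  | gradOrR F G H =>
      cases hF with | grad h1 h2 => cases h2 with | or h3 h4 =>
      exact .or (.grad h1 h3) (.grad h1 h4)
  | andL G h ih => cases hF with | and h1 h2 => exact .and (ih h1) h2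
  | andR F h ih => cases hF with | and h1 h2 => exact .and h1 (ih h2)
  | orL G h ih => cases hF with | or h1 h2 => exact .or (ih h1) h2
  | orR F h ih => cases hF with | or h1 h2 => exact .or h1 (ih h2)
  | negC h ih => cases hF
  | gradL G h ih => cases hF with | grad h1 h2 => exact .grad (ih h1) h2
  | gradR F h ih => cases hF with | grad h1 h2 => exact .grad h1 (ih h2)

theorem step_negFree_gstep {A : Type} {c : A → A} {F F' : Fm A}
    (h : Step c F F') (hF : NegFree F) : GStep F F' := by
  induction h with
  | negAtom s => cases hF
  | negAnd F G => cases hF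
  | negOr F G => cases hF
  | negGrad s F => cases hF
  | gradAssoc F G H => exact .gradAssoc F G H
  | gradAndL F G H => exact .gradAndL F G H
  | gradOrL F G H => exact .gradOrL F G H
  | gradAndR F G H => exact .gradAndR F G H
  | gradOrR F G H => exact .gradOrR F G H
  | andL G h ih => cases hF with | and h1 h2 => exact .andL G (ih h1)
  | andR F h ih => cases hF with | and h1 h2 => exact .andR F (ih h2)
  | orL G h ih => cases hF with | or h1 h2 => exact .orL G (ih h1)
  | orR F h ih => cases hF with | or h1 h2 => exact .orR F (ih h2)
  | negC h ih => cases hF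
  | gradL G h ih => cases hF with | grad h1 h2 => exact .gradL G (ih h1)
  | gradR F h ih => cases hF with | grad h1 h2 => exact .gradR F (ih h2)

theorem gstep_gval {A : Type} {c : A → A} (M : GFrame A c) {F F' : Fm A}
    (h : GStep F F') (hF : NegFree F) :
    ∀ ψ, M.gval ψ F = M.gval ψ F' := by
  induction h with
  | gradAssoc F G H =>
      intro ψ
      cases hF with | grad h1 h2 => cases h1 with | grad h3 h4 =>
      simp only [GFrame.gval, gval_grad M (NegFree.grad h3 h4),
        gval_grad M h3, gval_grad M h4]
      apply bool_ext
      simp only [Bool.and_eq_true, Bool.or_eq_true]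
      tauto
  | gradAndL F G H =>
      intro ψ
      cases hF with | grad h1 h2 => cases h1 with | and h3 h4 =>
      simp only [GFrame.gval, gval_grad M (NegFree.and h3 h4),
        gval_grad M h3, gval_grad M h4]
      apply bool_ext
      simp only [Bool.and_eq_true, Bool.or_eq_true]
      tauto
  | gradOrL F G H =>
      intro ψ
      cases hF with | grad h1 h2 => cases h1 with | or h3 h4 =>
      simp only [GFrame.gval, gval_grad M (NegFree.or h3 h4),
        gval_grad M h3, gval_grad M h4]
      apply bool_ext
      simp only [Bool.and_eq_true, Bool.or_eq_true]
      tauto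
  | gradAndR F G H =>
      intro ψ
      cases hF with | grad h1 h2 =>
      simp only [GFrame.gval, gval_grad M h1]
      apply bool_ext
      simp only [Bool.and_eq_true, Bool.or_eq_true]
      tauto
  | gradOrR F G H =>
      intro ψ
      cases hF with | grad h1 h2 =>
      simp only [GFrame.gval, gval_grad M h1]
      apply bool_ext
      simp only [Bool.and_eq_true, Bool.or_eq_true]
      tauto
  | andL G h ih =>
      intro ψ
      cases hF with | and h1 h2 =>
      simp only [GFrame.gval]; rw [ih h1 ψ]
  | andR F h ih =>
      intro ψ
      cases hF with | and h1 h2 =>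
      simp only [GFrame.gval]; rw [ih h2 ψ]
  | orL G h ih =>
      intro ψ
      cases hF with | or h1 h2 =>
      simp only [GFrame.gval]; rw [ih h1 ψ]
  | orR F h ih =>
      intro ψ
      cases hF with | or h1 h2 =>
      simp only [GFrame.gval]; rw [ih h2 ψ]
  | negC h ih => cases hF
  | gradL G h ih =>
      intro ψ
      cases hF with | grad h1 h2 =>
      rw [gval_grad M h1 ψ G, gval_grad M (gstep_negFree h h1) ψ G, ih h1 ψ]
  | gradR F h ih =>
      intro ψ
      cases hF with | grad h1 h2 =>
      rw [gval_grad M h1, gval_grad M h1, ih h2]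

theorem red_gval {A : Type} {c : A → A} (M : GFrame A c) {F G : Fm A}
    (h : Red c F G) : NegFree F → ∀ ψ, M.gval ψ F = M.gval ψ G := by
  induction h using Relation.ReflTransGen.head_induction_on with
  | refl => intro _ ψ; rfl
  | head hstep _ ih =>
      intro hF ψ
      have hg := step_negFree_gstep hstep hF
      rw [gstep_gval M hg hF ψ]
      exact ih (gstep_negFree hg hF) ψ

theorem unitTail_negFree {A : Type} {F : Fm A} (h : UnitTail F) : NegFree F := by
  induction h with
  | atom s => exact .atom s
  | grad s h ih => exact .grad (.atom s) ih

theorem uce_negFree {A : Type} {F : Fm A} (h : UCE F) : NegFree F := by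
  induction h with
  | atom s => exact .atom s
  | and _ _ ih1 ih2 => exact .and ih1 ih2
  | or _ _ ih1 ih2 => exact .or ih1 ih2
  | chain s h => exact .grad (.atom s) (unitTail_negFree h)

theorem unitTail_gval {A : Type} {c : A → A} (M : GFrame A c) {F : Fm A}
    (h : UnitTail F) : ∀ ψ, M.gval ψ F = M.valAux ψ F := by
  induction h with
  | atom s => intro ψ; simp only [GFrame.gval, GFrame.valAux]
  | grad s h ih =>
      intro ψ
      simp only [GFrame.gval, GFrame.valAux]
      rw [ih]

theorem uce_gval {A : Type} {c : A → A} (M : GFrame A c) {F : Fm A}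
    (h : UCE F) : ∀ ψ, M.gval ψ F = M.valAux ψ F := by
  induction h with
  | atom s => intro ψ; simp only [GFrame.gval, GFrame.valAux]
  | and _ _ ih1 ih2 =>
      intro ψ; simp only [GFrame.gval, GFrame.valAux]; rw [ih1, ih2]
  | or _ _ ih1 ih2 =>
      intro ψ; simp only [GFrame.gval, GFrame.valAux]; rw [ih1, ih2]
  | chain s h =>
      intro ψ
      simp only [GFrame.gval, GFrame.valAux]
      rw [unitTail_gval M h]

theorem chainOf_negFree {A : Type} (s : Atom A) (l : List (Atom A)) :
    NegFree (chainOf s l) := by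
  induction l generalizing s with
  | nil => exact .atom s
  | cons t l ih => exact .grad (.atom s) (ih t)

theorem chainF_negFree {A : Type} (l : List (Atom A)) {F : Fm A}
    (hF : NegFree F) : NegFree (chainF l F) := by
  induction l with
  | nil => exact hF
  | cons t l ih => exact .grad (.atom t) ih

theorem conjList_negFree {A : Type} {F : Fm A} (hF : NegFree F)
    {l : List (Fm A)} (hl : ∀ G ∈ l, NegFree G) : NegFree (conjList F l) := by
  induction l generalizing F with
  | nil => exact hF
  | cons G l ih =>
      exact .and hF (ih (hl G (by simp)) (fun H hH => hl H (by simp [hH])))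

theorem conjAll_negFree {A : Type} (s₀ s₁ : Atom A) (rest : List (Atom A))
    {F : Fm A} (hF : NegFree F) : NegFree (conjAll s₀ s₁ rest F) := by
  apply conjList_negFree (chainF_negFree _ hF)
  intro G hG
  simp only [List.mem_map] at hG
  obtain ⟨p, _, rfl⟩ := hG
  exact chainF_negFree _ hF

theorem gval_chainF {A : Type} {c : A → A} (M : GFrame A c) (F : Fm A) :
    ∀ (l : List (Atom A)) (s : Atom A) ψ,
      M.gval ψ (chainF (s :: l) F)
        = (M.gval ψ (chainOf s l) && M.gval (ψ ++ (s :: l)) F) := by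
  intro l
  induction l with
  | nil => intro s ψ; simp only [chainF, chainOf, GFrame.gval]
  | cons t l ih =>
      intro s ψ
      simp only [chainF, chainOf, GFrame.gval] at *
      rw [ih t (ψ ++ [s])]
      simp [Bool.and_assoc]

theorem gval_conjList_mem {A : Type} {c : A → A} (M : GFrame A c) {ψ : List (Atom A)} :
    ∀ (l : List (Fm A)) (F : Fm A), M.gval ψ (conjList F l) = true →
      ∀ G ∈ F :: l, M.gval ψ G = true := by
  intro l
  induction l with
  | nil => intro F h G hG; simp at hG; subst hG; exact h
  | cons F' l ih =>
      intro F h G hG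
      simp only [conjList, GFrame.gval, Bool.and_eq_true] at h
      rcases List.mem_cons.mp hG with rfl | hG
      · exact h.1
      · exact ih F' h.2 G hG

theorem conjAll_last {A : Type} {c : A → A} (M : GFrame A c)
    (s₀ s₁ : Atom A) (rest : List (Atom A)) (F : Fm A) (ψ : List (Atom A))
    (h : M.gval ψ (conjAll s₀ s₁ rest F) = true) :
    M.gval ψ (chainF (s₀ :: s₁ :: rest) F) = true := by
  apply gval_conjList_mem M _ _ h
  cases rest with
  | nil => simp
  | cons x xs =>
      apply List.mem_cons_of_mem
      simp only [List.mem_map]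
      refine ⟨x :: xs, ?_, rfl⟩
      have : (x :: xs).inits = [] :: (xs.inits.map (x :: ·)) := by
        simp [List.inits]
      rw [this]
      simp only [List.tail_cons, List.mem_map]
      exact ⟨xs, by simp [List.mem_inits], rfl⟩

/-- the chain-extension law: the (reduction-computed) value of
(s₀⋗s₁⋗⋯⋗s_k)⋗F equals that of
(s₀⋗F) ∧ ((s₀⋗⋯⋗s_k) ∨ ((s₀⋗s₁⋗F) ∧ ⋯ ∧ (s₀⋗⋯⋗s_k⋗F))). -/
theorem stmt18 {A : Type} (c : A → A) (hc : Function.Involutive c)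
    (M : GFrame A c) (s₀ s₁ : Atom A) (rest : List (Atom A))
    {F : Fm A} (hF : UCE F) (G H : Fm A)
    (hG : Red c (Fm.grad (chainOf s₀ (s₁ :: rest)) F) G) (huG : UCE G)
    (hH : Red c (Fm.and (Fm.grad (Fm.atom s₀) F)
            (Fm.or (chainOf s₀ (s₁ :: rest)) (conjAll s₀ s₁ rest F))) H)
    (huH : UCE H) :
    M.val G = M.val H := by
  have nfF := uce_negFree hF
  have nf1 : NegFree (Fm.grad (chainOf s₀ (s₁ :: rest)) F) :=
    .grad (chainOf_negFree _ _) nfF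
  have nf2 : NegFree (Fm.and (Fm.grad (Fm.atom s₀) F)
      (Fm.or (chainOf s₀ (s₁ :: rest)) (conjAll s₀ s₁ rest F))) :=
    .and (.grad (.atom s₀) nfF)
      (.or (chainOf_negFree _ _) (conjAll_negFree _ _ _ nfF))
  have e1 : M.val G = M.gval [] (Fm.grad (chainOf s₀ (s₁ :: rest)) F) := by
    rw [GFrame.val, ← uce_gval M huG, ← red_gval M hG nf1]
  have e2 : M.val H = M.gval [] (Fm.and (Fm.grad (Fm.atom s₀) F)
      (Fm.or (chainOf s₀ (s₁ :: rest)) (conjAll s₀ s₁ rest F))) := by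
    rw [GFrame.val, ← uce_gval M huH, ← red_gval M hH nf2]
  rw [e1, e2]
  have key : M.gval [] (conjAll s₀ s₁ rest F) = true →
      M.gval [] (chainOf s₀ (s₁ :: rest)) = true := by
    intro hD
    have h2 := conjAll_last M s₀ s₁ rest F [] hD
    rw [gval_chainF, Bool.and_eq_true] at h2
    exact h2.1
  rw [gval_grad M (chainOf_negFree s₀ (s₁ :: rest)) [] F]
  simp only [GFrame.gval]
  rw [gval_sync M ([] ++ [s₀]) F ([] ++ [Atom.top]) (by simp)]
  have hC : M.gval [] (chainOf s₀ (s₁ :: rest))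
      = (M.I [] s₀ && M.gval ([] ++ [s₀]) (chainOf s₁ rest)) := by
    simp only [chainOf, GFrame.gval]
  rw [hC] at key ⊢
  cases hD : M.gval [] (conjAll s₀ s₁ rest F) with
  | false =>
      cases M.I [] s₀ <;> cases M.gval ([] ++ [s₀]) (chainOf s₁ rest) <;>
        cases M.gval ([] ++ [Atom.top]) F <;> rfl
  | true =>
      have hax := key hD
      rw [Bool.and_eq_true] at hax
      rw [hax.1, hax.2]
      cases M.gval ([] ++ [Atom.top]) F <;> rfl
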